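/- Let (λ_n) be a sequence of real numbers with λ_n² < 1/2 for all n and Σ_{n=1}^∞ λ_n² ln(n+1) < ∞, where (λ_n²) is sorted in descending order. For n ∈ ℕ and R ∈ ℝ define I_n(R) = (2π)^{−n/2} ∫_{{x ∈ ℝⁿ : Σ_{a=1}^n λ_a² x_a² ≥ R}} exp(−½ Σ_{a=1}^n (1 − λ_a²) x_a²) dⁿx. Then lim_{R→∞} sup_{n ∈ ℕ} I_n(R) = 0; in fact there exist constants ϱ, β > 0 such that for all R > 2/(ϱβ), sup_{n ∈ ℕ} I_n(R) ≤ exp(Σ_{a=1}^∞ λ_a²) · (ζ(ϱβR/2) − 1), where ζ denotes the Riemann zeta function. -/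

import Mathlib

open Filter Topology
open MeasureTheory Real

/-- The quantity
`I_n(R) = (2π)^{−n/2} ∫_{Σ λ_a² x_a² ≥ R} exp (−½ Σ (1 − λ_a²) x_a²) dx` on `ℝⁿ`. -/
noncomputable def gaussTailIntegral (lam : ℕ → ℝ) (n : ℕ) (R : ℝ) : ℝ :=
  (2 * Real.pi) ^ (-(n : ℝ) / 2) *
    ∫ x in {x : Fin n → ℝ | R ≤ ∑ a : Fin n, lam a.val ^ 2 * x a ^ 2},
      Real.exp (-(1 / 2) * ∑ a : Fin n, (1 - lam a.val ^ 2) * x a ^ 2)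

/-- The Riemann zeta function `ζ(s) = ∑_{n≥1} n^{−s}` for real `s`. -/
noncomputable def realZeta (s : ℝ) : ℝ := ∑' n : ℕ, ((n : ℝ) + 1) ^ (-s)

-- product gaussian integral
lemma gauss_prod_eq (n : ℕ) (d : Fin n → ℝ) (hd : ∀ a, 0 < d a) :
    ∫ x : Fin n → ℝ, Real.exp (-(1 / 2) * ∑ a, d a * x a ^ 2) =
      ∏ a, Real.sqrt (Real.pi / (d a / 2)) := by
  have h : ∀ x : Fin n → ℝ, Real.exp (-(1 / 2) * ∑ a, d a * x a ^ 2) =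
      ∏ a, Real.exp (-(d a / 2) * x a ^ 2) := by
    intro x
    rw [← Real.exp_sum]
    congr 1
    rw [Finset.mul_sum]
    exact Finset.sum_congr rfl fun a _ => by ring
  simp_rw [h]
  rw [MeasureTheory.volume_pi, MeasureTheory.integral_fintype_prod_eq_prod
      (fun a (y : ℝ) => Real.exp (-(d a / 2) * y ^ 2))]
  exact Finset.prod_congr rfl fun a _ => integral_gaussian (d a / 2)

lemma gauss_prod_integrable (n : ℕ) (d : Fin n → ℝ) (hd : ∀ a, 0 < d a) :
    Integrable (fun x : Fin n → ℝ => Real.exp (-(1 / 2) * ∑ a, d a * x a ^ 2)) := by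
  have h : ∀ x : Fin n → ℝ, Real.exp (-(1 / 2) * ∑ a, d a * x a ^ 2) =
      ∏ a, Real.exp (-(d a / 2) * x a ^ 2) := by
    intro x
    rw [← Real.exp_sum]
    congr 1
    rw [Finset.mul_sum]
    exact Finset.sum_congr rfl fun a _ => by ring
  simp_rw [h]
  exact Integrable.fintype_prod fun a => integrable_exp_neg_mul_sq (half_pos (hd a))

lemma factor_eq (c : ℝ) (hc : 0 < c) :
    (2 * Real.pi) ^ (-(1 : ℝ) / 2) * Real.sqrt (Real.pi / (c / 2)) =
      Real.exp (-(1 / 2) * Real.log c) := by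
  have h2π : (0 : ℝ) < 2 * Real.pi := by positivity
  have h1 : Real.pi / (c / 2) = 2 * Real.pi / c := by
    field_simp
  rw [h1, Real.sqrt_eq_rpow, Real.div_rpow h2π.le hc.le, div_eq_mul_inv ((2*Real.pi) ^ ((1:ℝ)/2)) (c ^ ((1:ℝ)/2)), ← mul_assoc,
    ← Real.rpow_add h2π]
  have h0 : (-(1:ℝ)/2 + 1/2) = 0 := by norm_num
  rw [h0, Real.rpow_zero, one_mul, Real.rpow_def_of_pos hc, ← Real.exp_neg]
  congr 1; ring

lemma main_bound (lam : ℕ → ℝ) (hhalf : ∀ n, lam n ^ 2 < 1 / 2) (n : ℕ) (R : ℝ) :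
    gaussTailIntegral lam n R ≤
      Real.exp (-(R / 2)) *
        ∏ a : Fin n, Real.exp (-(1 / 2) * Real.log (1 - 2 * lam a.val ^ 2)) := by
  have hd1 : ∀ a : Fin n, 0 < 1 - lam a.val ^ 2 := fun a => by
    have := hhalf a.val; nlinarith [sq_nonneg (lam a.val)]
  have hd2 : ∀ a : Fin n, 0 < 1 - 2 * lam a.val ^ 2 := fun a => by
    have := hhalf a.val; nlinarith
  have hS : MeasurableSet {x : Fin n → ℝ | R ≤ ∑ a : Fin n, lam a.val ^ 2 * x a ^ 2} := by
    apply measurableSet_le measurable_const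
    exact Finset.measurable_sum _ fun a _ =>
      (((measurable_pi_apply a).pow_const 2).const_mul _)
  have hf : Integrable (fun x : Fin n → ℝ =>
      Real.exp (-(1 / 2) * ∑ a : Fin n, (1 - lam a.val ^ 2) * x a ^ 2)) :=
    gauss_prod_integrable n (fun a => 1 - lam a.val ^ 2) hd1
  have hg2 : Integrable (fun x : Fin n → ℝ =>
      Real.exp (-(1 / 2) * ∑ a : Fin n, (1 - 2 * lam a.val ^ 2) * x a ^ 2)) :=
    gauss_prod_integrable n (fun a => 1 - 2 * lam a.val ^ 2) hd2
  have hg : Integrable (fun x : Fin n → ℝ => Real.exp (-(R / 2)) *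
      Real.exp (-(1 / 2) * ∑ a : Fin n, (1 - 2 * lam a.val ^ 2) * x a ^ 2)) :=
    hg2.const_mul _
  have hmono : ∀ x ∈ {x : Fin n → ℝ | R ≤ ∑ a : Fin n, lam a.val ^ 2 * x a ^ 2},
      Real.exp (-(1 / 2) * ∑ a : Fin n, (1 - lam a.val ^ 2) * x a ^ 2) ≤
      Real.exp (-(R / 2)) *
        Real.exp (-(1 / 2) * ∑ a : Fin n, (1 - 2 * lam a.val ^ 2) * x a ^ 2) := by
    intro x hx
    rw [← Real.exp_add]
    apply Real.exp_le_exp.2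
    have hsplit : ∑ a : Fin n, (1 - lam a.val ^ 2) * x a ^ 2 =
        (∑ a : Fin n, (1 - 2 * lam a.val ^ 2) * x a ^ 2) +
          ∑ a : Fin n, lam a.val ^ 2 * x a ^ 2 := by
      rw [← Finset.sum_add_distrib]
      exact Finset.sum_congr rfl fun a _ => by ring
    have hxS : R ≤ ∑ a : Fin n, lam a.val ^ 2 * x a ^ 2 := hx
    rw [hsplit]; linarith
  have key : (∫ x in {x : Fin n → ℝ | R ≤ ∑ a : Fin n, lam a.val ^ 2 * x a ^ 2},
        Real.exp (-(1 / 2) * ∑ a : Fin n, (1 - lam a.val ^ 2) * x a ^ 2)) ≤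
      Real.exp (-(R / 2)) * ∏ a : Fin n, Real.sqrt (Real.pi / ((1 - 2 * lam a.val ^ 2) / 2)) := by
    have h1 := setIntegral_mono_on hf.integrableOn hg.integrableOn hS hmono
    have h2 := setIntegral_le_integral (s := {x : Fin n → ℝ | R ≤ ∑ a : Fin n, lam a.val ^ 2 * x a ^ 2}) hg
      (Filter.Eventually.of_forall fun x => by positivity)
    have h3 : (∫ x : Fin n → ℝ, Real.exp (-(R / 2)) *
          Real.exp (-(1 / 2) * ∑ a : Fin n, (1 - 2 * lam a.val ^ 2) * x a ^ 2)) =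
        Real.exp (-(R / 2)) * ∏ a : Fin n, Real.sqrt (Real.pi / ((1 - 2 * lam a.val ^ 2) / 2)) := by
      rw [integral_const_mul, gauss_prod_eq n (fun a => 1 - 2 * lam a.val ^ 2) hd2]
    linarith
  have hpow : ((2 : ℝ) * Real.pi) ^ (-(n : ℝ) / 2) =
      ∏ _a : Fin n, (2 * Real.pi) ^ (-(1 : ℝ) / 2) := by
    rw [Finset.prod_const, Finset.card_univ, Fintype.card_fin,
      ← Real.rpow_natCast ((2 * Real.pi) ^ (-(1 : ℝ) / 2)) n,
      ← Real.rpow_mul (by positivity)]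
    congr 1; ring
  have hpos : (0 : ℝ) ≤ ((2 : ℝ) * Real.pi) ^ (-(n : ℝ) / 2) :=
    Real.rpow_nonneg (by positivity) _
  unfold gaussTailIntegral
  calc (2 * Real.pi) ^ (-(n : ℝ) / 2) *
        ∫ x in {x : Fin n → ℝ | R ≤ ∑ a : Fin n, lam a.val ^ 2 * x a ^ 2},
          Real.exp (-(1 / 2) * ∑ a : Fin n, (1 - lam a.val ^ 2) * x a ^ 2)
      ≤ ((2 : ℝ) * Real.pi) ^ (-(n : ℝ) / 2) * (Real.exp (-(R / 2)) *
          ∏ a : Fin n, Real.sqrt (Real.pi / ((1 - 2 * lam a.val ^ 2) / 2))) :=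
        mul_le_mul_of_nonneg_left key hpos
    _ = Real.exp (-(R / 2)) * ∏ a : Fin n,
          ((2 * Real.pi) ^ (-(1 : ℝ) / 2) * Real.sqrt (Real.pi / ((1 - 2 * lam a.val ^ 2) / 2))) := by
        rw [Finset.prod_mul_distrib, ← hpow]; ring
    _ = Real.exp (-(R / 2)) *
          ∏ a : Fin n, Real.exp (-(1 / 2) * Real.log (1 - 2 * lam a.val ^ 2)) := by
        congr 1
        exact Finset.prod_congr rfl fun a _ => factor_eq _ (hd2 a)

lemma zeta_lb (x : ℝ) (hx : 1 < x) : (2 : ℝ) ^ (-x) ≤ realZeta x - 1 := by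
  have hsum : Summable (fun n : ℕ => ((n : ℝ) + 1) ^ (-x)) := by
    have h : Summable (fun n : ℕ => ((n + 1 : ℕ) : ℝ) ^ (-x)) :=
      (summable_nat_add_iff 1).2 (Real.summable_nat_rpow.2 (by linarith))
    have : (fun n : ℕ => ((n + 1 : ℕ) : ℝ) ^ (-x)) = fun n : ℕ => ((n : ℝ) + 1) ^ (-x) := by
      funext n; push_cast; ring_nf
    rwa [this] at h
  have hs := Summable.sum_le_tsum ({0, 1} : Finset ℕ)
    (fun i _ => Real.rpow_nonneg (by positivity) _) hsum
  rw [Finset.sum_pair (by norm_num : (0 : ℕ) ≠ 1)] at hs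
  have h0 : (((0 : ℕ) : ℝ) + 1) ^ (-x) = 1 := by norm_num
  have h1 : (((1 : ℕ) : ℝ) + 1) ^ (-x) = (2 : ℝ) ^ (-x) := by norm_num
  rw [h0, h1] at hs
  simp only [realZeta]
  linarith

/-- If `(λ_n)` satisfies `λ_n² < 1/2`, is sorted descendingly and
`∑ λ_n² log (n+1) < ∞`, then `sup_n I_n(R) → 0` as `R → ∞`; more precisely there are
`ϱ, β > 0` with `sup_n I_n(R) ≤ exp (∑ λ_a²) (ζ(ϱβR/2) − 1)` for all `R > 2/(ϱβ)`. -/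
theorem statement_17 (lam : ℕ → ℝ)
    (hhalf : ∀ n, lam n ^ 2 < 1 / 2)
    (hdec : Antitone fun n => lam n ^ 2)
    (hlogsum : Summable fun n : ℕ => lam n ^ 2 * Real.log ((n : ℝ) + 2)) :
    (∀ ε : ℝ, 0 < ε → ∃ R₀ : ℝ, ∀ R ≥ R₀, ∀ n : ℕ, gaussTailIntegral lam n R ≤ ε) ∧
    ∃ ϱ : ℝ, 0 < ϱ ∧ ∃ β : ℝ, 0 < β ∧ ∀ R : ℝ, 2 / (ϱ * β) < R → ∀ n : ℕ,
      gaussTailIntegral lam n R ≤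
        Real.exp (∑' a : ℕ, lam a ^ 2) * (realZeta (ϱ * β * R / 2) - 1) := by
  set g : ℕ → ℝ := fun a => -(1 / 2) * Real.log (1 - 2 * lam a ^ 2) with hgdef
  have hδ : 0 < 1 - 2 * lam 0 ^ 2 := by have := hhalf 0; nlinarith
  have hc : ∀ a : ℕ, 0 < 1 - 2 * lam a ^ 2 := fun a => by have := hhalf a; nlinarith
  have hcδ : ∀ a : ℕ, 1 - 2 * lam 0 ^ 2 ≤ 1 - 2 * lam a ^ 2 := fun a => by
    have := hdec (Nat.zero_le a); simp only at this; nlinarith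
  have hg0 : ∀ a, 0 ≤ g a := fun a => by
    have hle1 : 1 - 2 * lam a ^ 2 ≤ 1 := by nlinarith [sq_nonneg (lam a)]
    have := Real.log_nonpos (hc a).le hle1
    simp only [hgdef]; nlinarith
  have hgle : ∀ a, g a ≤ lam a ^ 2 * (1 - 2 * lam 0 ^ 2)⁻¹ := by
    intro a
    have hca := hc a
    have h1 : Real.log (1 - 2 * lam a ^ 2)⁻¹ ≤ (1 - 2 * lam a ^ 2)⁻¹ - 1 :=
      Real.log_le_sub_one_of_pos (inv_pos.2 hca)
    have h2 : (1 - 2 * lam a ^ 2)⁻¹ ≤ (1 - 2 * lam 0 ^ 2)⁻¹ :=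
      inv_anti₀ hδ (hcδ a)
    have h3 : (1 - 2 * lam a ^ 2)⁻¹ - 1 = 2 * lam a ^ 2 * (1 - 2 * lam a ^ 2)⁻¹ := by
      field_simp; ring
    have h4 : 2 * lam a ^ 2 * (1 - 2 * lam a ^ 2)⁻¹ ≤
        2 * lam a ^ 2 * (1 - 2 * lam 0 ^ 2)⁻¹ :=
      mul_le_mul_of_nonneg_left h2 (by positivity)
    have h5 : -Real.log (1 - 2 * lam a ^ 2) = Real.log (1 - 2 * lam a ^ 2)⁻¹ :=
      (Real.log_inv _).symm
    simp only [hgdef]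
    nlinarith [h1, h4]
  have hlog2 : 0 < Real.log 2 := Real.log_pos one_lt_two
  have hlam2 : Summable fun a : ℕ => lam a ^ 2 := by
    apply Summable.of_nonneg_of_le (fun a => sq_nonneg _) (fun a => ?_)
      (hlogsum.mul_right (Real.log 2)⁻¹)
    have hlg : Real.log 2 ≤ Real.log ((a : ℝ) + 2) :=
      Real.log_le_log two_pos (by push_cast; linarith [Nat.cast_nonneg (α := ℝ) a])
    calc lam a ^ 2 = lam a ^ 2 * Real.log 2 * (Real.log 2)⁻¹ := by field_simp
      _ ≤ lam a ^ 2 * Real.log ((a : ℝ) + 2) * (Real.log 2)⁻¹ := by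
          apply mul_le_mul_of_nonneg_right _ (inv_nonneg.2 hlog2.le)
          exact mul_le_mul_of_nonneg_left hlg (sq_nonneg _)
  have hgsum : Summable g :=
    Summable.of_nonneg_of_le hg0 hgle (hlam2.mul_right _)
  set T : ℝ := ∑' a, g a with hTdef
  have hT0 : 0 ≤ T := tsum_nonneg hg0
  -- uniform bound
  have unif : ∀ (n : ℕ) (R : ℝ), gaussTailIntegral lam n R ≤ Real.exp (T - R / 2) := by
    intro n R
    refine (main_bound lam hhalf n R).trans ?_
    have hprod : (∏ a : Fin n, Real.exp (-(1 / 2) * Real.log (1 - 2 * lam a.val ^ 2))) =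
        Real.exp (∑ i ∈ Finset.range n, g i) := by
      rw [← Real.exp_sum, Fin.sum_univ_eq_sum_range (fun i => g i) n]
    rw [hprod, ← Real.exp_add]
    apply Real.exp_le_exp.2
    have := Summable.sum_le_tsum (Finset.range n) (fun i _ => hg0 i) hgsum
    rw [← hTdef] at this
    linarith
  constructor
  · intro ε hε
    refine ⟨2 * (T - Real.log ε), fun R hR n => ?_⟩
    refine (unif n R).trans ?_
    rw [← Real.exp_log hε]
    apply Real.exp_le_exp.2
    linarith
  · set s : ℝ := min (1 / (2 * Real.log 2)) (1 / (2 * (T + 1))) with hsdef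
    have hs : 0 < s := lt_min (by positivity) (by positivity)
    refine ⟨s, hs, 1, one_pos, fun R hR n => ?_⟩
    rw [mul_one] at hR ⊢
    have hsR : 2 < s * R := by
      rw [div_lt_iff₀ hs] at hR; linarith [hR]
    have hR0 : 0 < R := by nlinarith
    have hs1 : s * Real.log 2 ≤ 1 / 2 := by
      have h := min_le_left (1 / (2 * Real.log 2)) (1 / (2 * (T + 1)))
      rw [← hsdef] at h
      rw [le_div_iff₀ (by positivity)] at h
      nlinarith
    have hs2 : s * (2 * (T + 1)) ≤ 1 := by
      have h := min_le_right (1 / (2 * Real.log 2)) (1 / (2 * (T + 1)))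
      rw [← hsdef] at h
      rw [le_div_iff₀ (by positivity)] at h
      linarith
    have hx : 1 < s * R / 2 := by linarith
    have step1 : Real.exp (T - R / 2) ≤ (2 : ℝ) ^ (-(s * R / 2)) := by
      rw [Real.rpow_def_of_pos two_pos]
      apply Real.exp_le_exp.2
      have hRbig : 4 * (T + 1) < R := by nlinarith
      nlinarith [mul_le_mul_of_nonneg_right hs1 hR0.le]
    have step2 := zeta_lb (s * R / 2) hx
    have hexp1 : 1 ≤ Real.exp (∑' a : ℕ, lam a ^ 2) :=
      Real.one_le_exp (tsum_nonneg fun a => sq_nonneg _)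
    have hnn : 0 ≤ realZeta (s * R / 2) - 1 :=
      le_trans (Real.rpow_nonneg (by norm_num) _) step2
    calc gaussTailIntegral lam n R ≤ Real.exp (T - R / 2) := unif n R
      _ ≤ (2 : ℝ) ^ (-(s * R / 2)) := step1
      _ ≤ realZeta (s * R / 2) - 1 := step2
      _ ≤ Real.exp (∑' a : ℕ, lam a ^ 2) * (realZeta (s * R / 2) - 1) :=
          le_mul_of_one_le_left hnn hexp1
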